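/- Let Γ : G → R be a partial projective representation with factor set σ. Then for all g, h ∈ G: Γ(g⁻¹)Γ(gh) = 0 if and only if Γ(g)Γ(h) = 0, if and only if Γ(gh)Γ(h⁻¹) = 0. -/
import Mathlib


/-- Let `Γ : G → R` be a partial projective representation with factor
set `σ`.  Then for all `g, h ∈ G`:
`Γ(g⁻¹)Γ(gh) = 0 ↔ Γ(g)Γ(h) = 0 ↔ Γ(gh)Γ(h⁻¹) = 0`. -/
theorem partialProjRep_null_iff
    {κ G R : Type*} [Field κ] [Group G] [Ring R] [Algebra κ R]
    (Γ : G → R) (σ : G → G → κ)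
    (h1 : ∀ g h : G, σ g h = 0 → Γ g⁻¹ * Γ (g * h) = 0 ∧ Γ (g * h) * Γ h⁻¹ = 0)
    (h2 : ∀ g h : G, Γ g⁻¹ * Γ g * Γ h = σ g h • (Γ g⁻¹ * Γ (g * h)))
    (h3 : ∀ g h : G, Γ g * Γ h * Γ h⁻¹ = σ g h • (Γ (g * h) * Γ h⁻¹))
    (h4 : Γ 1 = 1)
    (hfac : ∀ g h : G, Γ g * Γ h = 0 → σ g h = 0) :
    ∀ g h : G, (Γ g⁻¹ * Γ (g * h) = 0 ↔ Γ g * Γ h = 0) ∧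
      (Γ g * Γ h = 0 ↔ Γ (g * h) * Γ h⁻¹ = 0) := by
  -- key: Γg Γg⁻¹ Γg = σ(g,g⁻¹) • Γg
  have key : ∀ g : G, Γ g * Γ g⁻¹ * Γ g = σ g g⁻¹ • Γ g := by
    intro g
    have := h3 g g⁻¹
    rw [mul_inv_cancel, h4, inv_inv, one_mul] at this
    exact this
  -- if σ(g,g⁻¹) = 0 then Γ g = 0
  have deg : ∀ g : G, σ g g⁻¹ = 0 → Γ g = 0 := by
    intro g hs
    have := (h1 g g⁻¹ hs).2
    rwa [mul_inv_cancel, h4, inv_inv, one_mul] at this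
  intro g h
  constructor
  · constructor
    · intro hz
      by_cases hs : σ g g⁻¹ = 0
      · rw [deg g hs, zero_mul]
      · have e1 : Γ g⁻¹ * Γ g * Γ h = 0 := by rw [h2 g h, hz, smul_zero]
        have e2 : Γ g * (Γ g⁻¹ * Γ g * Γ h) = 0 := by rw [e1, mul_zero]
        have e3 : σ g g⁻¹ • (Γ g * Γ h) = 0 := by
          calc σ g g⁻¹ • (Γ g * Γ h) = (σ g g⁻¹ • Γ g) * Γ h := by rw [smul_mul_assoc]
            _ = Γ g * Γ g⁻¹ * Γ g * Γ h := by rw [key g]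
            _ = Γ g * (Γ g⁻¹ * Γ g * Γ h) := by simp only [mul_assoc]
            _ = 0 := e2
        exact (smul_eq_zero.mp e3).resolve_left hs
    · intro hz
      exact (h1 g h (hfac g h hz)).1
  · constructor
    · intro hz
      exact (h1 g h (hfac g h hz)).2
    · intro hz
      by_cases hs : σ h h⁻¹ = 0
      · rw [deg h hs, mul_zero]
      · have e1 : Γ g * Γ h * Γ h⁻¹ = 0 := by rw [h3 g h, hz, smul_zero]
        have e2 : Γ g * Γ h * Γ h⁻¹ * Γ h = 0 := by rw [e1, zero_mul]
        have e3 : σ h h⁻¹ • (Γ g * Γ h) = 0 := by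
          calc σ h h⁻¹ • (Γ g * Γ h) = Γ g * (σ h h⁻¹ • Γ h) := by rw [mul_smul_comm]
            _ = Γ g * (Γ h * Γ h⁻¹ * Γ h) := by rw [key h]
            _ = Γ g * Γ h * Γ h⁻¹ * Γ h := by simp only [mul_assoc]
            _ = 0 := e2
        exact (smul_eq_zero.mp e3).resolve_left hs
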